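/- Let A be a real 2×2 matrix with entries a₁₁, a₁₂, a₂₁, a₂₂ satisfying a₁₂ ≠ 0, let b = (b₁, b₂) ∈ ℝ², let c ≠ 0 be real, and set k = a₁₂²c², τ = trace A, δ = det A, χ = sgn(a₁₂c). Define x = u/k, y = (−a₂₂u + a₁₂w + b₁η)/k, μ = ((1−a₂₂)b₁ + a₁₂b₂)η/k. If u ≥ 0, (u', w') = A·(u, w − c√u) + b·η, and (x', y') are the new coordinates of (u', w'), then x' = τx + y − χ√x and y' = −δx + μ. In particular x ≥ 0 and the map in new coordinates equals the impacting branch of the Nordmark normal form. -/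

import Mathlib

/-- The coordinate change `x = u/k`, `y = (−a₂₂u + a₁₂w + b₁η)/k`,
`μ = ((1−a₂₂)b₁ + a₁₂b₂)η/k`, with `k = a₁₂²c²`, transforms the impacting branch
`(u,w) ↦ A(u, w − c√u) + bη` (for `u ≥ 0`) into the impacting branch of the Nordmark
normal form `(x,y) ↦ (τx + y − χ√x, −δx + μ)`, with `τ = trace A`, `δ = det A`,
`χ = sgn(a₁₂c)`; moreover `x ≥ 0`. -/
theorem nordmark_impacting_normal_form
    (a11 a12 a21 a22 b1 b2 c η u w u' w' : ℝ)
    (ha12 : a12 ≠ 0) (hc : c ≠ 0)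
    (A : Matrix (Fin 2) (Fin 2) ℝ) (hA : A = !![a11, a12; a21, a22])
    (k τ δ χ x y μ x' y' : ℝ)
    (hk : k = a12 ^ 2 * c ^ 2)
    (hτ : τ = A.trace) (hδ : δ = A.det) (hχ : χ = Real.sign (a12 * c))
    (hx : x = u / k)
    (hy : y = (-a22 * u + a12 * w + b1 * η) / k)
    (hμ : μ = ((1 - a22) * b1 + a12 * b2) * η / k)
    (hu : 0 ≤ u)
    (hu' : u' = a11 * u + a12 * (w - c * Real.sqrt u) + b1 * η)
    (hw' : w' = a21 * u + a22 * (w - c * Real.sqrt u) + b2 * η)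
    (hx' : x' = u' / k)
    (hy' : y' = (-a22 * u' + a12 * w' + b1 * η) / k) :
    0 ≤ x ∧ x' = τ * x + y - χ * Real.sqrt x ∧ y' = -δ * x + μ := by

  have hac : a12 * c ≠ 0 := mul_ne_zero ha12 hc
  have hk0 : k = (a12 * c) ^ 2 := by rw [hk]; ring
  have hkpos : 0 < k := by rw [hk0]; positivity
  have hτ' : τ = a11 + a22 := by
    rw [hτ, hA, Matrix.trace_fin_two_of]
  have hδ' : δ = a11 * a22 - a12 * a21 := by
    rw [hδ, hA, Matrix.det_fin_two_of]
  have hsx : Real.sqrt x = Real.sqrt u / |a12 * c| := by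
    rw [hx, Real.sqrt_div hu, hk0, Real.sqrt_sq_eq_abs]
  have hχs : χ * Real.sqrt x = a12 * c * Real.sqrt u / k := by
    rw [hsx, hχ, hk0]
    have habs : |a12 * c| ≠ 0 := abs_ne_zero.mpr hac
    have h2 : (a12 * c) ^ 2 = |a12 * c| * |a12 * c| := by
      rw [← sq_abs]; ring
    have hsgn : Real.sign (a12 * c) * |a12 * c| = a12 * c := by
      rcases lt_or_gt_of_ne hac with h | h
      · rw [Real.sign_of_neg h, abs_of_neg h]; ring
      · rw [Real.sign_of_pos h, abs_of_pos h]; ring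
    have habs2 : (a12 * c) * (a12 * c) = |a12 * c| * |a12 * c| := h2 ▸ by ring
    field_simp
    rcases lt_or_gt_of_ne hac with h | h
    · rw [Real.sign_of_neg h, abs_of_neg h]; ring
    · rw [Real.sign_of_pos h, abs_of_pos h]; ring
  refine ⟨by rw [hx]; positivity, ?_, ?_⟩
  · rw [hx', hu', hτ', hχs, hx, hy]
    field_simp
    ring
  · rw [hy', hu', hw', hδ', hx, hμ]
    field_simp
    ring
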